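/- (Existence of a robust network) Let d, k ≥ 1 with d ≥ 2 and 6 · ln d < √d, and let μ : Fin k → ℝ^d be orthogonal equinorm cluster features with binary cluster labels s. Then the feature-decoupled network f_dec is (√d / 3)-robust: the probability over (J, ξ) ~ (uniform on Fin k) ⊗ γ_d that sgn(f_dec(μ_J + ξ + ρ)) = s J holds for every perturbation ρ ∈ ℝ^d with ‖ρ‖ ≤ √d / 3 is at least 1 − 2k · d^{−(ln d)/2}. -/

import Mathlib

open MeasureTheory ProbabilityTheory Real Finset
open scoped RealInnerProductSpace

/-- The standard Gaussian measure on `ℝ^d`. -/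
noncomputable def stdGaussian (d : ℕ) : Measure (EuclideanSpace ℝ (Fin d)) :=
  (Measure.pi fun _ : Fin d => gaussianReal 0 1).map (MeasurableEquiv.toLp 2 (Fin d → ℝ))

/-- The sign function: `1` on positive reals, `-1` otherwise. -/
noncomputable def sgn (z : ℝ) : ℝ := if 0 < z then 1 else -1

/-- The ReLU activation. -/
noncomputable def relu (z : ℝ) : ℝ := max z 0

/-- The feature-decoupled network. -/
noncomputable def fDec {d k : ℕ} (μ : Fin k → EuclideanSpace ℝ (Fin d)) (s : Fin k → ℝ)
    (x : EuclideanSpace ℝ (Fin d)) : ℝ :=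
  ∑ j ∈ univ.filter (fun j => s j = 1), relu (⟪μ j, x⟫ - d / 2) -
    ∑ j ∈ univ.filter (fun j => s j = -1), relu (⟪μ j, x⟫ - d / 2)

section Aux


open MeasureTheory ProbabilityTheory Real Finset

lemma exp_mul_gaussianPDFReal (t x : ℝ) :
    rexp (t * x) * gaussianPDFReal 0 1 x = rexp (t ^ 2 / 2) * gaussianPDFReal t 1 x := by
  simp only [gaussianPDFReal, NNReal.coe_one, mul_one]
  rw [mul_left_comm, mul_comm (rexp (t ^ 2 / 2)), mul_assoc]
  congr 1
  rw [← Real.exp_add, ← Real.exp_add]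
  congr 1
  ring

lemma integrable_exp_mul_gaussian (t : ℝ) :
    Integrable (fun x => rexp (t * x)) (gaussianReal 0 1) := by
  rw [gaussianReal_of_var_ne_zero 0 one_ne_zero]
  rw [integrable_withDensity_iff (measurable_gaussianPDF 0 1)
    (ae_of_all _ fun x => ENNReal.ofReal_lt_top)]
  have : (fun x => rexp (t * x) * (gaussianPDF 0 1 x).toReal)
      = fun x => rexp (t ^ 2 / 2) * gaussianPDFReal t 1 x := by
    ext x
    rw [gaussianPDF_def, ENNReal.toReal_ofReal (gaussianPDFReal_nonneg 0 1 x)]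
    simpa using exp_mul_gaussianPDFReal t x
  rw [this]
  exact (integrable_gaussianPDFReal t 1).const_mul _

lemma integral_exp_mul_gaussian (t : ℝ) :
    ∫ x, rexp (t * x) ∂(gaussianReal 0 1) = rexp (t ^ 2 / 2) := by
  rw [gaussianReal_of_var_ne_zero 0 one_ne_zero]
  have h : (gaussianPDF 0 1) = fun x => ((gaussianPDFReal 0 1 x).toNNReal : ENNReal) := rfl
  rw [h, integral_withDensity_eq_integral_smul
    (by exact (measurable_gaussianPDFReal 0 1).real_toNNReal) _]
  have : (fun x => (gaussianPDFReal 0 1 x).toNNReal • rexp (t * x))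
      = fun x => rexp (t ^ 2 / 2) • gaussianPDFReal t 1 x := by
    ext x
    rw [NNReal.smul_def, Real.coe_toNNReal _ (gaussianPDFReal_nonneg 0 1 x)]
    simpa [mul_comm] using exp_mul_gaussianPDFReal t x
  rw [this, integral_smul, integral_gaussianPDFReal_eq_one t one_ne_zero, smul_eq_mul, mul_one]


open MeasureTheory ProbabilityTheory Real Finset

noncomputable def gpi (n : ℕ) : Measure (Fin n → ℝ) := Measure.pi fun _ : Fin n => gaussianReal 0 1

instance (n : ℕ) : IsProbabilityMeasure (gpi n) := by unfold gpi; infer_instance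

lemma integrable_pi_prod : ∀ (n : ℕ) (f : Fin n → ℝ → ℝ),
    (∀ i, Integrable (f i) (gaussianReal 0 1)) →
    Integrable (fun x : Fin n → ℝ => ∏ i, f i (x i)) (gpi n) := by
  intro n
  induction n with
  | zero => intro f hf; simp [gpi]
  | succ n ih =>
      intro f hf
      have A := ((measurePreserving_piFinSuccAbove
        (fun _ : Fin (n + 1) => gaussianReal 0 1) 0).symm)
      rw [gpi, ← A.integrable_comp_emb (MeasurableEquiv.measurableEmbedding _)]
      simp_rw [MeasurableEquiv.piFinSuccAbove_symm_apply, Fin.insertNthEquiv,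
        Fin.prod_univ_succ, Fin.insertNth_zero]
      simp only [Fin.zero_succAbove, Function.comp_def, Fin.cons_zero, Fin.cons_succ]
      exact Integrable.mul_prod (hf 0) (ih (fun i => f i.succ) (fun i => hf _))

lemma integral_pi_prod : ∀ (n : ℕ) (f : Fin n → ℝ → ℝ),
    ∫ x : Fin n → ℝ, ∏ i, f i (x i) ∂(gpi n) = ∏ i, ∫ x, f i x ∂(gaussianReal 0 1) := by
  intro n
  induction n with
  | zero => intro f; simp [gpi]
  | succ n ih =>
      intro f
      calc
        _ = ∫ x : ℝ × (Fin n → ℝ),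
            f 0 x.1 * ∏ i : Fin n, f i.succ (x.2 i) ∂((gaussianReal 0 1).prod (gpi n)) := by
          rw [gpi, ← ((measurePreserving_piFinSuccAbove
            (fun _ : Fin (n + 1) => gaussianReal 0 1) 0).symm).integral_comp']
          simp_rw [MeasurableEquiv.piFinSuccAbove_symm_apply, Fin.insertNthEquiv,
            Fin.prod_univ_succ, Fin.insertNth_zero]
          simp only [Fin.zero_succAbove, Equiv.coe_fn_mk, Fin.cons_zero, Fin.cons_succ]
          rfl
        _ = (∫ x, f 0 x ∂(gaussianReal 0 1)) *
            ∏ i : Fin n, ∫ x, f i.succ x ∂(gaussianReal 0 1) := by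
          rw [← ih (fun i => f i.succ), ← integral_prod_mul]
        _ = ∏ i, ∫ x, f i x ∂(gaussianReal 0 1) := by rw [Fin.prod_univ_succ]

lemma exp_sum_eq (n : ℕ) (c : Fin n → ℝ) (t : ℝ) (x : Fin n → ℝ) :
    rexp (t * ∑ i, c i * x i) = ∏ i, rexp (t * c i * x i) := by
  rw [← Real.exp_sum, Finset.mul_sum]
  congr 1; exact Finset.sum_congr rfl fun i _ => by ring

lemma mgf_linear (n : ℕ) (c : Fin n → ℝ) (t : ℝ) :
    ∫ x, rexp (t * ∑ i, c i * x i) ∂(gpi n) = rexp (t ^ 2 * (∑ i, c i ^ 2) / 2) := by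
  simp_rw [exp_sum_eq]
  rw [integral_pi_prod n (fun i y => rexp (t * c i * y))]
  simp_rw [integral_exp_mul_gaussian]
  rw [← Real.exp_sum]
  congr 1
  rw [Finset.mul_sum, Finset.sum_div]
  exact Finset.sum_congr rfl fun i _ => by ring

lemma integrable_exp_linear (n : ℕ) (c : Fin n → ℝ) (t : ℝ) :
    Integrable (fun x => rexp (t * ∑ i, c i * x i)) (gpi n) := by
  simp_rw [exp_sum_eq]
  exact integrable_pi_prod n (fun i y => rexp (t * c i * y))
    (fun i => integrable_exp_mul_gaussian _)

lemma gaussian_tail (n : ℕ) (hn : 2 ≤ n) (c : Fin n → ℝ) (hc : ∑ i, c i ^ 2 = n) :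
    gpi n {x | Real.sqrt n * Real.log n ≤ ∑ i, c i * x i} ≤
      ENNReal.ofReal (rexp (-(Real.log n) ^ 2 / 2)) := by
  have hn0 : (0:ℝ) < n := by positivity
  have hln : 0 < Real.log n := Real.log_pos (by exact_mod_cast hn)
  have hsq : (0:ℝ) < Real.sqrt n := Real.sqrt_pos.2 hn0
  set t : ℝ := Real.log n / Real.sqrt n with ht
  have ht0 : 0 ≤ t := le_of_lt (div_pos hln hsq)
  have hch := measure_ge_le_exp_mul_mgf (μ := gpi n) (X := fun x => ∑ i, c i * x i)
    (Real.sqrt n * Real.log n) ht0 (integrable_exp_linear n c t)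
  have hmgf : mgf (fun x => ∑ i, c i * x i) (gpi n) t = rexp ((Real.log n) ^ 2 / 2) := by
    rw [mgf, mgf_linear n c t, hc]
    congr 1
    rw [ht, div_pow, Real.sq_sqrt hn0.le]
    field_simp
  rw [hmgf, ← Real.exp_add] at hch
  have harg : -t * (Real.sqrt n * Real.log n) + (Real.log n) ^ 2 / 2
      = -(Real.log n) ^ 2 / 2 := by
    rw [ht]
    field_simp
    ring
  rw [harg] at hch
  have := ENNReal.ofReal_le_ofReal hch
  rwa [measureReal_def, ENNReal.ofReal_toReal (measure_ne_top _ _)] at this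

lemma geometry {d k : ℕ} (hd : 2 ≤ d)
    (hlog : 6 * Real.log d < Real.sqrt d)
    (μ : Fin k → EuclideanSpace ℝ (Fin d))
    (hnorm : ∀ j, ‖μ j‖ = Real.sqrt d)
    (horth : ∀ i j, i ≠ j → ⟪μ i, μ j⟫ = 0)
    (s : Fin k → ℝ) (hs : ∀ j, s j = 1 ∨ s j = -1)
    (J : Fin k) (ξ : EuclideanSpace ℝ (Fin d))
    (hξ : ∀ j, |⟪μ j, ξ⟫| < Real.sqrt d * Real.log d)
    (ρ : EuclideanSpace ℝ (Fin d)) (hρ : ‖ρ‖ ≤ Real.sqrt d / 3) :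
    sgn (fDec μ s (μ J + ξ + ρ)) = s J := by
  have hd0 : (0:ℝ) < d := by positivity
  have hd2 : (2:ℝ) ≤ d := by exact_mod_cast hd
  have hsq : Real.sqrt d * Real.sqrt d = d := Real.mul_self_sqrt hd0.le
  have hsqpos : 0 < Real.sqrt d := Real.sqrt_pos.2 hd0
  have hT : Real.sqrt d * Real.log d < d / 6 := by nlinarith [hlog, hsqpos]
  have hρb : ∀ j, |⟪μ j, ρ⟫| ≤ d / 3 := by
    intro j
    calc |⟪μ j, ρ⟫| ≤ ‖μ j‖ * ‖ρ‖ := abs_real_inner_le_norm _ _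
    _ ≤ Real.sqrt d * (Real.sqrt d / 3) := by
        rw [hnorm]; exact mul_le_mul_of_nonneg_left hρ hsqpos.le
    _ = d / 3 := by linear_combination hsq / 3
  have hexp : ∀ j, ⟪μ j, μ J + ξ + ρ⟫ = ⟪μ j, μ J⟫ + ⟪μ j, ξ⟫ + ⟪μ j, ρ⟫ := by
    intro j; rw [inner_add_right, inner_add_right]
  have hpos : 0 < ⟪μ J, μ J + ξ + ρ⟫ - (d:ℝ) / 2 := by
    have h1 : ⟪μ J, μ J⟫ = (d:ℝ) := by
      rw [real_inner_self_eq_norm_sq, hnorm, Real.sq_sqrt hd0.le]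
    have h2 := abs_lt.mp (hξ J)
    have h3 := abs_le.mp (hρb J)
    rw [hexp, h1]
    nlinarith [h2.1, h3.1, hT]
  have hneg : ∀ j, j ≠ J → relu (⟪μ j, μ J + ξ + ρ⟫ - (d:ℝ) / 2) = 0 := by
    intro j hj
    have h1 : ⟪μ j, μ J⟫ = 0 := horth j J hj
    have h2 := abs_lt.mp (hξ j)
    have h3 := abs_le.mp (hρb j)
    have : ⟪μ j, μ J + ξ + ρ⟫ - (d:ℝ) / 2 ≤ 0 := by
      rw [hexp, h1]; nlinarith [h2.2, h3.2, hT]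
    exact max_eq_right this
  rcases hs J with hJ | hJ
  · have hsum2 : ∑ j ∈ univ.filter (fun j => s j = -1),
        relu (⟪μ j, μ J + ξ + ρ⟫ - (d:ℝ) / 2) = 0 := by
      refine Finset.sum_eq_zero fun j hj => ?_
      refine hneg j fun h => ?_
      rw [Finset.mem_filter] at hj
      rw [h, hJ] at hj
      norm_num at hj
    have hsum1 : 0 < ∑ j ∈ univ.filter (fun j => s j = 1),
        relu (⟪μ j, μ J + ξ + ρ⟫ - (d:ℝ) / 2) := by
      refine Finset.sum_pos' (fun j _ => le_max_right _ _) ⟨J, ?_, ?_⟩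
      · simp [hJ]
      · exact lt_max_iff.mpr (Or.inl hpos)
    rw [hJ]
    unfold sgn fDec
    rw [hsum2, if_pos (by linarith)]
  · have hsum1 : ∑ j ∈ univ.filter (fun j => s j = 1),
        relu (⟪μ j, μ J + ξ + ρ⟫ - (d:ℝ) / 2) = 0 := by
      refine Finset.sum_eq_zero fun j hj => ?_
      refine hneg j fun h => ?_
      rw [Finset.mem_filter] at hj
      rw [h, hJ] at hj
      norm_num at hj
    have hsum2 : 0 < ∑ j ∈ univ.filter (fun j => s j = -1),
        relu (⟪μ j, μ J + ξ + ρ⟫ - (d:ℝ) / 2) := by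
      refine Finset.sum_pos' (fun j _ => le_max_right _ _) ⟨J, ?_, ?_⟩
      · simp [hJ]
      · exact lt_max_iff.mpr (Or.inl hpos)
    rw [hJ]
    unfold sgn fDec
    rw [hsum1, if_neg (by linarith)]


end Aux

theorem featureDecoupled_robust (d k : ℕ) (hd : 2 ≤ d) (hk : 1 ≤ k)
    (hlog : 6 * Real.log d < Real.sqrt d)
    (μ : Fin k → EuclideanSpace ℝ (Fin d))
    (hnorm : ∀ j, ‖μ j‖ = Real.sqrt d)
    (horth : ∀ i j, i ≠ j → ⟪μ i, μ j⟫ = 0)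
    (s : Fin k → ℝ) (hs : ∀ j, s j = 1 ∨ s j = -1) :
    ENNReal.ofReal (1 - 2 * k * (d : ℝ) ^ (-(Real.log d) / 2)) ≤
      (((k : ENNReal)⁻¹ • (Measure.count : Measure (Fin k))).prod (stdGaussian d))
        {p : Fin k × EuclideanSpace ℝ (Fin d) |
          ∀ ρ : EuclideanSpace ℝ (Fin d), ‖ρ‖ ≤ Real.sqrt d / 3 →
            sgn (fDec μ s (μ p.1 + p.2 + ρ)) = s p.1} := by
  classical
  haveI : IsProbabilityMeasure (stdGaussian d) := by
    constructor
    rw [_root_.stdGaussian, Measure.map_apply (MeasurableEquiv.toLp 2 (Fin d → ℝ)).measurable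
      MeasurableSet.univ, Set.preimage_univ]
    exact measure_univ
  have hd0 : (0:ℝ) < d := by positivity
  set T := Real.sqrt d * Real.log d with hTdef
  set e : ℝ := rexp (-(Real.log d) ^ 2 / 2) with hedef
  have he0 : 0 ≤ e := (Real.exp_pos _).le
  have hinner : ∀ (j : Fin k) (x : EuclideanSpace ℝ (Fin d)), ⟪μ j, x⟫ = ∑ i, μ j i * x i := by
    intro j x
    simp [PiLp.inner_apply, RCLike.inner_apply, conj_trivial]
    exact Finset.sum_congr rfl fun i _ => mul_comm _ _
  have hsum_sq : ∀ j, ∑ i, (μ j i) ^ 2 = (d:ℝ) := by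
    intro j
    have h1 : ‖μ j‖ ^ 2 = (d:ℝ) := by rw [hnorm j, Real.sq_sqrt hd0.le]
    rw [EuclideanSpace.norm_eq] at h1
    rw [← h1, Real.sq_sqrt (by positivity)]
    simp [sq_abs]
  set bad : Fin k → Set (EuclideanSpace ℝ (Fin d)) :=
    fun j => {ξ | T ≤ |⟪μ j, ξ⟫|} with hbaddef
  have hmeas_inner : ∀ j, Measurable fun ξ : EuclideanSpace ℝ (Fin d) => ⟪μ j, ξ⟫ :=
    fun j => (Continuous.inner continuous_const continuous_id).measurable
  have hbad_meas : ∀ j, MeasurableSet (bad j) :=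
    fun j => measurableSet_le measurable_const (hmeas_inner j).abs
  have tail1 : ∀ (c : Fin d → ℝ), (∑ i, c i ^ 2 = (d:ℝ)) →
      stdGaussian d {ξ : EuclideanSpace ℝ (Fin d) | T ≤ ∑ i, c i * ξ i} ≤
        ENNReal.ofReal e := by
    intro c hc
    rw [_root_.stdGaussian, Measure.map_apply (MeasurableEquiv.toLp 2 (Fin d → ℝ)).measurable
      (isClosed_le continuous_const (by fun_prop)).measurableSet]
    exact gaussian_tail d hd c hc
  have hbadj : ∀ j, stdGaussian d (bad j) ≤ ENNReal.ofReal (2 * e) := by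
    intro j
    have hsub : bad j ⊆ {ξ : EuclideanSpace ℝ (Fin d) | T ≤ ∑ i, μ j i * ξ i} ∪
        {ξ : EuclideanSpace ℝ (Fin d) | T ≤ ∑ i, (-(μ j i)) * ξ i} := by
      intro ξ hξ
      have hξ' : T ≤ |⟪μ j, ξ⟫| := hξ
      rcases le_abs.mp hξ' with h | h
      · left; rw [Set.mem_setOf_eq, ← hinner]; exact h
      · right
        rw [Set.mem_setOf_eq]
        have : ∑ i, (-(μ j i)) * ξ i = -⟪μ j, ξ⟫ := by
          rw [hinner]
          simp [neg_mul, Finset.sum_neg_distrib]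
        rw [this]; exact h
    calc stdGaussian d (bad j)
        ≤ stdGaussian d ({ξ : EuclideanSpace ℝ (Fin d) | T ≤ ∑ i, μ j i * ξ i} ∪
          {ξ : EuclideanSpace ℝ (Fin d) | T ≤ ∑ i, (-(μ j i)) * ξ i}) := measure_mono hsub
      _ ≤ stdGaussian d {ξ : EuclideanSpace ℝ (Fin d) | T ≤ ∑ i, μ j i * ξ i} +
          stdGaussian d {ξ : EuclideanSpace ℝ (Fin d) | T ≤ ∑ i, (-(μ j i)) * ξ i} :=
          measure_union_le _ _
      _ ≤ ENNReal.ofReal e + ENNReal.ofReal e :=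
          add_le_add (tail1 _ (hsum_sq j)) (tail1 _ (by simpa [neg_sq] using hsum_sq j))
      _ = ENNReal.ofReal (2 * e) := by rw [← ENNReal.ofReal_add he0 he0]; ring_nf
  set B := ⋃ j, bad j with hBdef
  have hB_meas : MeasurableSet B := MeasurableSet.iUnion hbad_meas
  have hBb : stdGaussian d B ≤ ENNReal.ofReal (2 * k * e) := by
    calc stdGaussian d B ≤ ∑ j, stdGaussian d (bad j) := measure_iUnion_fintype_le _ _
      _ ≤ ∑ _j : Fin k, ENNReal.ofReal (2 * e) := Finset.sum_le_sum fun j _ => hbadj j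
      _ = (k : ENNReal) * ENNReal.ofReal (2 * e) := by
          rw [Finset.sum_const, Finset.card_univ, Fintype.card_fin, nsmul_eq_mul]
      _ = ENNReal.ofReal (2 * k * e) := by
          rw [← ENNReal.ofReal_natCast k, ← ENNReal.ofReal_mul (by positivity)]
          ring_nf
  have hrpow : (d:ℝ) ^ (-(Real.log d) / 2) = e := by
    rw [Real.rpow_def_of_pos hd0, hedef]
    congr 1
    ring
  have hcompl : ENNReal.ofReal (1 - 2 * k * (d:ℝ) ^ (-(Real.log d) / 2)) ≤
      stdGaussian d Bᶜ := by
    rw [prob_compl_eq_one_sub hB_meas, hrpow]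
    calc ENNReal.ofReal (1 - 2 * k * e)
        = ENNReal.ofReal 1 - ENNReal.ofReal (2 * k * e) :=
          ENNReal.ofReal_sub _ (by positivity)
      _ = 1 - ENNReal.ofReal (2 * k * e) := by rw [ENNReal.ofReal_one]
      _ ≤ 1 - stdGaussian d B := tsub_le_tsub_left hBb 1
  have hν : ((k : ENNReal)⁻¹ • (Measure.count : Measure (Fin k))) Set.univ = 1 := by
    rw [Measure.smul_apply, Measure.count_univ, ENat.card_eq_coe_fintype_card, ENat.toENNReal_coe, Fintype.card_fin, smul_eq_mul]
    exact ENNReal.inv_mul_cancel (Nat.cast_ne_zero.mpr (by omega)) (ENNReal.natCast_ne_top k)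
  have hsubset : Set.univ ×ˢ Bᶜ ⊆ {p : Fin k × EuclideanSpace ℝ (Fin d) |
      ∀ ρ : EuclideanSpace ℝ (Fin d), ‖ρ‖ ≤ Real.sqrt d / 3 →
        sgn (fDec μ s (μ p.1 + p.2 + ρ)) = s p.1} := by
    rintro ⟨J, ξ⟩ ⟨-, hξ⟩ ρ hρ
    rw [Set.mem_compl_iff, hBdef, Set.mem_iUnion] at hξ
    push_neg at hξ
    refine geometry hd hlog μ hnorm horth s hs J ξ (fun j => ?_) ρ hρ
    have h2 : ¬ T ≤ |⟪μ j, ξ⟫| := hξ j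
    exact not_le.mp h2
  calc ENNReal.ofReal (1 - 2 * k * (d:ℝ) ^ (-(Real.log d) / 2))
      ≤ stdGaussian d Bᶜ := hcompl
    _ = ((k : ENNReal)⁻¹ • (Measure.count : Measure (Fin k))) Set.univ *
        stdGaussian d Bᶜ := by rw [hν, one_mul]
    _ = (((k : ENNReal)⁻¹ • (Measure.count : Measure (Fin k))).prod (stdGaussian d))
        (Set.univ ×ˢ Bᶜ) := (Measure.prod_prod _ _).symm
    _ ≤ _ := measure_mono hsubset
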